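/- arXiv:2201.12503 — 3 statements merged into one kernel-verified Lean document; each statement's English description precedes it below -/
import Mathlib

section
/- Let f ∈ ℍ[t] be a polynomial over the quaternions and let α ∈ ℍ be a non-real quaternion (α is not of the form r·1 with r ∈ ℝ). Then every element of the similarity class [α] is a right root of f if and only if f is divisible by the characteristic polynomial χ_α := t² − 2·Re(α)·t + ‖α‖², i.e. there exists q ∈ ℍ[t] with f = q·χ_α (here the real coefficients of χ_α are regarded as quaternions). -/
open Polynomial

/-- Right evaluation of a quaternionic polynomial `f` at `β`:
`evʳ_f(β) = Σ_k f_k β^k`, coefficients on the left. -/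
noncomputable def evalR (β : Quaternion ℝ) (f : Polynomial (Quaternion ℝ)) : Quaternion ℝ :=
  ∑ k ∈ Finset.range (f.natDegree + 1), f.coeff k * β ^ k

/-- The similarity class of a quaternion `α`: all `γ α γ⁻¹` with `γ ≠ 0`. -/
def simClass (α : Quaternion ℝ) : Set (Quaternion ℝ) :=
  {β | ∃ γ : Quaternion ℝ, γ ≠ 0 ∧ β = γ * α * γ⁻¹}

/-- The characteristic polynomial `χ_α = t² - 2 Re(α) t + ‖α‖²` of a quaternion `α`,
its real coefficients regarded as quaternions. -/
noncomputable def charPoly (α : Quaternion ℝ) : Polynomial (Quaternion ℝ) :=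
  X ^ 2 - C ((2 * α.re : ℝ) : Quaternion ℝ) * X + C ((‖α‖ ^ 2 : ℝ) : Quaternion ℝ)

lemma evalR_eq_eval₂ (β : Quaternion ℝ) (f : Polynomial (Quaternion ℝ)) :
    evalR β f = eval₂ (RingHom.id _) β f := by
  rw [eval₂_eq_sum_range]; rfl

lemma charPoly_coeff_commute (α β : Quaternion ℝ) (k : ℕ) :
    Commute ((charPoly α).coeff k) β := by
  have : charPoly α = (X ^ 2 - C (2 * α.re) * X + C (‖α‖ ^ 2) : Polynomial ℝ).map
      (algebraMap ℝ (Quaternion ℝ)) := by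
    simp [charPoly, Polynomial.map_add, Polynomial.map_sub, Polynomial.map_mul]
  rw [this, coeff_map]
  exact Algebra.commute_algebraMap_left _ _

lemma evalR_mul_charPoly (β : Quaternion ℝ) (p : Polynomial (Quaternion ℝ)) (α : Quaternion ℝ) :
    evalR β (p * charPoly α) = evalR β p * evalR β (charPoly α) := by
  simp only [evalR_eq_eval₂]
  exact eval₂_mul_noncomm _ _ fun k => charPoly_coeff_commute α β k

lemma evalR_charPoly (β α : Quaternion ℝ) :
    evalR β (charPoly α) =
      β ^ 2 - ((2 * α.re : ℝ) : Quaternion ℝ) * β + ((‖α‖ ^ 2 : ℝ) : Quaternion ℝ) := by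
  rw [evalR_eq_eval₂, charPoly]
  simp only [eval₂_add, eval₂_sub, eval₂_mul_X, eval₂_X_pow, eval₂_C, RingHom.id_apply]

lemma quad_self (α : Quaternion ℝ) :
    α ^ 2 - ((2 * α.re : ℝ) : Quaternion ℝ) * α + ((‖α‖ ^ 2 : ℝ) : Quaternion ℝ) = 0 := by
  have h1 : ((2 * α.re : ℝ) : Quaternion ℝ) = α + star α := (Quaternion.self_add_star' α).symm
  have h2 : ((‖α‖ ^ 2 : ℝ) : Quaternion ℝ) = α * star α := by
    rw [Quaternion.self_mul_star]
    rw [Quaternion.normSq_eq_norm_mul_self, sq]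
  have h3 : star α * α = α * star α := star_comm_self' α
  rw [h1, h2, sq, add_mul, h3]
  abel

lemma quad_conj (α β : Quaternion ℝ) (hβ : β ∈ simClass α) :
    evalR β (charPoly α) = 0 := by
  obtain ⟨γ, hγ, rfl⟩ := hβ
  rw [evalR_charPoly]
  have e1 : (γ * α * γ⁻¹) ^ 2 = γ * α ^ 2 * γ⁻¹ := by
    rw [sq, sq]
    simp only [mul_assoc]
    rw [inv_mul_cancel_left₀ hγ]
  have e2 : ((2 * α.re : ℝ) : Quaternion ℝ) * (γ * α * γ⁻¹)
      = γ * (((2 * α.re : ℝ) : Quaternion ℝ) * α) * γ⁻¹ := by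
    rw [Quaternion.coe_mul_eq_smul, Quaternion.coe_mul_eq_smul, mul_smul_comm, smul_mul_assoc]
  have e3 : ∀ r : ℝ, ((r : ℝ) : Quaternion ℝ) = γ * ((r : ℝ) : Quaternion ℝ) * γ⁻¹ := by
    intro r
    rw [Quaternion.mul_coe_eq_smul, smul_mul_assoc, mul_inv_cancel₀ hγ]
    ext <;> simp [Quaternion.re_one, Quaternion.imI_one, Quaternion.imJ_one, Quaternion.imK_one]
  rw [e1, e2]
  conv_lhs => rw [e3 (‖α‖ ^ 2)]
  rw [show γ * α ^ 2 * γ⁻¹ - γ * (((2 * α.re : ℝ) : Quaternion ℝ) * α) * γ⁻¹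
        + γ * ((‖α‖ ^ 2 : ℝ) : Quaternion ℝ) * γ⁻¹
      = γ * (α ^ 2 - ((2 * α.re : ℝ) : Quaternion ℝ) * α + ((‖α‖ ^ 2 : ℝ) : Quaternion ℝ)) * γ⁻¹
    from by noncomm_ring, quad_self, mul_zero, zero_mul]

lemma charPoly_rest (α : Quaternion ℝ) :
    charPoly α = X ^ 2 + (-(C ((2 * α.re : ℝ) : Quaternion ℝ) * X)
      + C ((‖α‖ ^ 2 : ℝ) : Quaternion ℝ)) := by
  rw [charPoly, sub_eq_add_neg, add_assoc]

lemma rest_degree_lt (α : Quaternion ℝ) :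
    (-(C ((2 * α.re : ℝ) : Quaternion ℝ) * X)
      + C ((‖α‖ ^ 2 : ℝ) : Quaternion ℝ)).degree < 2 := by
  apply lt_of_le_of_lt (degree_add_le _ _)
  refine max_lt ?_ ?_
  · rw [degree_neg]
    exact lt_of_le_of_lt (degree_C_mul_X_le _) (by norm_num)
  · exact lt_of_le_of_lt degree_C_le (by norm_num)

lemma monic_charPoly (α : Quaternion ℝ) : Monic (charPoly α) := by
  rw [charPoly_rest]
  exact monic_X_pow_add (by simpa using rest_degree_lt α)

lemma degree_charPoly (α : Quaternion ℝ) : (charPoly α).degree = 2 := by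
  have h : (X ^ 2 : Polynomial (Quaternion ℝ)).degree = 2 := by
    rw [degree_X_pow]; rfl
  rw [charPoly_rest, degree_add_eq_left_of_degree_lt (by rw [h]; exact rest_degree_lt α), h]

lemma C_real_commute (r : ℝ) (p : Polynomial (Quaternion ℝ)) :
    Commute (C ((r : ℝ) : Quaternion ℝ)) p := by
  show _ = _
  refine Polynomial.ext fun n => ?_
  rw [coeff_C_mul, coeff_mul_C, Quaternion.coe_commutes]

lemma commute_charPoly (α : Quaternion ℝ) (q : Polynomial (Quaternion ℝ)) :
    charPoly α * q = q * charPoly α := by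
  have h1 : Commute (X ^ 2 : Polynomial (Quaternion ℝ)) q := (commute_X q).pow_left 2
  have h2 : Commute (C ((2 * α.re : ℝ) : Quaternion ℝ) * X) q :=
    (C_real_commute _ q).mul_left (commute_X q)
  have h3 : Commute (C ((‖α‖ ^ 2 : ℝ) : Quaternion ℝ)) q := C_real_commute _ q
  exact (h1.sub_left h2).add_left h3

lemma exists_ne_mem_simClass (α : Quaternion ℝ) (hα : ¬∃ r : ℝ, α = (r : Quaternion ℝ)) :
    ∃ β ∈ simClass α, β ≠ α := by
  have him : α.imI ≠ 0 ∨ α.imJ ≠ 0 ∨ α.imK ≠ 0 := by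
    by_contra h
    push_neg at h
    exact hα ⟨α.re, by ext <;> simp [h.1, h.2.1, h.2.2]⟩
  by_cases hjk : α.imJ = 0 ∧ α.imK = 0
  · have hb : α.imI ≠ 0 := by tauto
    set γ : Quaternion ℝ := ⟨0, 0, 1, 0⟩ with hγdef
    have hγ : γ ≠ 0 := by
      intro h
      have := congrArg QuaternionAlgebra.imJ h
      simp [hγdef, Quaternion.imJ_zero] at this
    refine ⟨γ * α * γ⁻¹, ⟨γ, hγ, rfl⟩, fun h => ?_⟩
    have h' : γ * α = α * γ := by
      have := congrArg (· * γ) h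
      simpa [mul_assoc, inv_mul_cancel₀ hγ] using this
    have h2 := congrArg QuaternionAlgebra.imK h'
    rw [Quaternion.imK_mul, Quaternion.imK_mul] at h2
    simp [hγdef, Quaternion.imK_mul] at h2
    -- expect something like -α.imI = α.imI
    apply hb
    linarith [h2]
  · set γ : Quaternion ℝ := ⟨0, 1, 0, 0⟩ with hγdef
    have hγ : γ ≠ 0 := by
      intro h
      have := congrArg QuaternionAlgebra.imI h
      simp [hγdef, Quaternion.imI_zero] at this
    refine ⟨γ * α * γ⁻¹, ⟨γ, hγ, rfl⟩, fun h => ?_⟩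
    have h' : γ * α = α * γ := by
      have := congrArg (· * γ) h
      simpa [mul_assoc, inv_mul_cancel₀ hγ] using this
    have h2 := congrArg QuaternionAlgebra.imJ h'
    have h3 := congrArg QuaternionAlgebra.imK h'
    rw [Quaternion.imJ_mul, Quaternion.imJ_mul] at h2
    rw [Quaternion.imK_mul, Quaternion.imK_mul] at h3
    simp [hγdef, Quaternion.imJ_mul, Quaternion.imK_mul] at h2 h3
    exact hjk ⟨by linarith [h3], by linarith [h2]⟩

/-- For a non-real quaternion `α`, the whole similarity class `[α]` consists of right
roots of `f` if and only if `f` is divisible by the characteristic polynomial `χ_α`. -/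
theorem class_roots_iff_charPoly_dvd (f : Polynomial (Quaternion ℝ)) (α : Quaternion ℝ)
    (hα : ¬∃ r : ℝ, α = (r : Quaternion ℝ)) :
    (∀ β ∈ simClass α, evalR β f = 0) ↔
      ∃ q : Polynomial (Quaternion ℝ), f = q * charPoly α := by
  constructor
  · intro hroots
    set q := f /ₘ charPoly α with hq
    set r := f %ₘ charPoly α with hr
    have hfeq : f = q * charPoly α + r := by
      conv_lhs => rw [← modByMonic_add_div f (charPoly α)]
      rw [← commute_charPoly, add_comm]
    have hdeg : r.degree < 2 := degree_charPoly α ▸ degree_modByMonic_lt f (monic_charPoly α)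
    have hdeg1 : r.degree ≤ 1 := by
      rcases hd : r.degree with _ | n
      · exact bot_le
      · rw [hd] at hdeg
        rw [show (some n : WithBot ℕ) = (n : WithBot ℕ) from rfl] at hdeg ⊢
        have hn : n < 2 := by exact_mod_cast hdeg
        have h1 : n ≤ 1 := by omega
        exact_mod_cast h1
    have hrform : r = C (r.coeff 1) * X + C (r.coeff 0) := eq_X_add_C_of_degree_le_one hdeg1
    have hrval : ∀ β ∈ simClass α, r.coeff 1 * β + r.coeff 0 = 0 := by
      intro β hβ
      have h0 := hroots β hβ
      rw [evalR_eq_eval₂, hfeq, eval₂_add] at h0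
      have h1 : eval₂ (RingHom.id _) β (q * charPoly α) = 0 := by
        rw [← evalR_eq_eval₂, evalR_mul_charPoly, quad_conj α β hβ, mul_zero]
      rw [h1, zero_add] at h0
      calc r.coeff 1 * β + r.coeff 0 = eval₂ (RingHom.id _) β r := by
            conv_rhs => rw [hrform]
            simp only [eval₂_add, eval₂_mul_X, eval₂_C, RingHom.id_apply]
        _ = 0 := h0
    have hαmem : α ∈ simClass α := ⟨1, one_ne_zero, by simp⟩
    obtain ⟨β, hβmem, hβne⟩ := exists_ne_mem_simClass α hα
    have e1 := hrval α hαmem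
    have e2 := hrval β hβmem
    have hc1 : r.coeff 1 = 0 := by
      have hab : r.coeff 1 * α = r.coeff 1 * β := add_right_cancel (e1.trans e2.symm)
      have : r.coeff 1 * (α - β) = 0 := by rw [mul_sub, hab, sub_self]
      rcases mul_eq_zero.1 this with h | h
      · exact h
      · exact absurd (sub_eq_zero.1 h).symm hβne
    have hc0 : r.coeff 0 = 0 := by
      have := e1
      rw [hc1, zero_mul, zero_add] at this
      exact this
    refine ⟨q, ?_⟩
    rw [hfeq, hrform, hc0, hc1]
    simp
  · rintro ⟨q, rfl⟩ β hβ
    rw [evalR_mul_charPoly, quad_conj α β hβ, mul_zero]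
end

section
/- Let f ∈ ℍ[t] be a nonzero special quaternionic polynomial, and let p ∈ ℝ[t] be a real polynomial such that f̄·f equals the image of p under the algebra map ℝ[t] → ℍ[t]. Then f can be written as a product f = g₁·g₂·⋯·g_m of polynomials of the form g = a + (b𝐣)·t with a, b ∈ ℂ (linear special polynomials) if and only if every complex root of p lies on the imaginary axis, i.e. for every w ∈ ℂ with p(w) = 0 one has Re(w) = 0. -/
open Polynomial
open scoped Quaternion

/-- The complex number `z = x + iy` viewed as the quaternion `x + y𝐢`. -/
def toQ (z : ℂ) : Quaternion ℝ := ⟨z.re, z.im, 0, 0⟩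

/-- The quaternion `z𝐣 = x𝐣 + y𝐤` for a complex number `z = x + iy`. -/
def toQj (z : ℂ) : Quaternion ℝ := ⟨0, 0, z.re, z.im⟩

/-- A quaternionic polynomial is *special* if all its even-degree coefficients lie in
`span_ℝ{1, 𝐢}` and all its odd-degree coefficients lie in `span_ℝ{𝐣, 𝐤}`. -/
def IsSpecial (f : Polynomial (Quaternion ℝ)) : Prop :=
  ∀ k : ℕ, (Even k → (f.coeff k).imJ = 0 ∧ (f.coeff k).imK = 0) ∧
    (Odd k → (f.coeff k).re = 0 ∧ (f.coeff k).imI = 0)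

/-- The conjugate polynomial `f̄`, obtained by applying quaternionic conjugation
to each coefficient of `f`. -/
noncomputable def pconj (f : Polynomial (Quaternion ℝ)) : Polynomial (Quaternion ℝ) :=
  ∑ k ∈ Finset.range (f.natDegree + 1), Polynomial.C (star (f.coeff k)) * Polynomial.X ^ k

def cq : ℂ →+* Quaternion ℝ where
  toFun := toQ
  map_one' := by ext <;> simp [toQ]
  map_mul' z w := by ext <;> simp only [Quaternion.re_mul, Quaternion.imI_mul, Quaternion.imJ_mul, Quaternion.imK_mul, Quaternion.re_star, Quaternion.imI_star, Quaternion.imJ_star, Quaternion.imK_star, Quaternion.re_neg, Quaternion.imI_neg, Quaternion.imJ_neg, Quaternion.imK_neg, Quaternion.re_add, Quaternion.imI_add, Quaternion.imJ_add, Quaternion.imK_add, Quaternion.re_one, Quaternion.imI_one, Quaternion.imJ_one, Quaternion.imK_one, Quaternion.re_zero, Quaternion.imI_zero, Quaternion.imJ_zero, Quaternion.imK_zero] <;> simp [toQ, Complex.mul_re, Complex.mul_im]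
  map_zero' := by ext <;> simp [toQ]
  map_add' z w := by ext <;> simp only [Quaternion.re_mul, Quaternion.imI_mul, Quaternion.imJ_mul, Quaternion.imK_mul, Quaternion.re_star, Quaternion.imI_star, Quaternion.imJ_star, Quaternion.imK_star, Quaternion.re_neg, Quaternion.imI_neg, Quaternion.imJ_neg, Quaternion.imK_neg, Quaternion.re_add, Quaternion.imI_add, Quaternion.imJ_add, Quaternion.imK_add, Quaternion.re_one, Quaternion.imI_one, Quaternion.imJ_one, Quaternion.imK_one, Quaternion.re_zero, Quaternion.imI_zero, Quaternion.imJ_zero, Quaternion.imK_zero] <;> simp [toQ]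

lemma cq_inj : Function.Injective cq := by
  intro a b h
  have h1 : (cq a).re = (cq b).re := by rw [h]
  have h2 : (cq a).imI = (cq b).imI := by rw [h]
  exact Complex.ext h1 h2

noncomputable def jj : Quaternion ℝ := ⟨0,0,1,0⟩

lemma jj_cq (z : ℂ) : jj * cq z = cq ((starRingEnd ℂ) z) * jj := by
  ext <;> simp only [Quaternion.re_mul, Quaternion.imI_mul, Quaternion.imJ_mul, Quaternion.imK_mul, Quaternion.re_star, Quaternion.imI_star, Quaternion.imJ_star, Quaternion.imK_star, Quaternion.re_neg, Quaternion.imI_neg, Quaternion.imJ_neg, Quaternion.imK_neg, Quaternion.re_add, Quaternion.imI_add, Quaternion.imJ_add, Quaternion.imK_add, Quaternion.re_one, Quaternion.imI_one, Quaternion.imJ_one, Quaternion.imK_one, Quaternion.re_zero, Quaternion.imI_zero, Quaternion.imJ_zero, Quaternion.imK_zero] <;> simp [jj, cq, toQ]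

lemma cq_jj (z : ℂ) : cq z * jj = toQj z := by
  ext <;> simp only [Quaternion.re_mul, Quaternion.imI_mul, Quaternion.imJ_mul, Quaternion.imK_mul, Quaternion.re_star, Quaternion.imI_star, Quaternion.imJ_star, Quaternion.imK_star, Quaternion.re_neg, Quaternion.imI_neg, Quaternion.imJ_neg, Quaternion.imK_neg, Quaternion.re_add, Quaternion.imI_add, Quaternion.imJ_add, Quaternion.imK_add, Quaternion.re_one, Quaternion.imI_one, Quaternion.imJ_one, Quaternion.imK_one, Quaternion.re_zero, Quaternion.imI_zero, Quaternion.imJ_zero, Quaternion.imK_zero] <;> simp [jj, cq, toQ, toQj]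

lemma jj_jj : jj * jj = -1 := by ext <;> simp only [Quaternion.re_mul, Quaternion.imI_mul, Quaternion.imJ_mul, Quaternion.imK_mul, Quaternion.re_star, Quaternion.imI_star, Quaternion.imJ_star, Quaternion.imK_star, Quaternion.re_neg, Quaternion.imI_neg, Quaternion.imJ_neg, Quaternion.imK_neg, Quaternion.re_add, Quaternion.imI_add, Quaternion.imJ_add, Quaternion.imK_add, Quaternion.re_one, Quaternion.imI_one, Quaternion.imJ_one, Quaternion.imK_one, Quaternion.re_zero, Quaternion.imI_zero, Quaternion.imJ_zero, Quaternion.imK_zero] <;> simp [jj]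

lemma star_cq (z : ℂ) : star (cq z) = cq ((starRingEnd ℂ) z) := by
  ext <;> simp only [Quaternion.re_mul, Quaternion.imI_mul, Quaternion.imJ_mul, Quaternion.imK_mul, Quaternion.re_star, Quaternion.imI_star, Quaternion.imJ_star, Quaternion.imK_star, Quaternion.re_neg, Quaternion.imI_neg, Quaternion.imJ_neg, Quaternion.imK_neg, Quaternion.re_add, Quaternion.imI_add, Quaternion.imJ_add, Quaternion.imK_add, Quaternion.re_one, Quaternion.imI_one, Quaternion.imJ_one, Quaternion.imK_one, Quaternion.re_zero, Quaternion.imI_zero, Quaternion.imJ_zero, Quaternion.imK_zero] <;> simp [cq, toQ]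

lemma star_toQj (z : ℂ) : star (toQj z) = -toQj z := by
  ext <;> simp only [Quaternion.re_mul, Quaternion.imI_mul, Quaternion.imJ_mul, Quaternion.imK_mul, Quaternion.re_star, Quaternion.imI_star, Quaternion.imJ_star, Quaternion.imK_star, Quaternion.re_neg, Quaternion.imI_neg, Quaternion.imJ_neg, Quaternion.imK_neg, Quaternion.re_add, Quaternion.imI_add, Quaternion.imJ_add, Quaternion.imK_add, Quaternion.re_one, Quaternion.imI_one, Quaternion.imJ_one, Quaternion.imK_one, Quaternion.re_zero, Quaternion.imI_zero, Quaternion.imJ_zero, Quaternion.imK_zero] <;> simp [toQj]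

noncomputable def Θ : Polynomial ℂ →+* Polynomial (Quaternion ℝ) :=
  eval₂RingHom' (C.comp cq) (X^2) (fun _ => (commute_X_pow _ 2).symm)

lemma Θ_monomial (n : ℕ) (a : ℂ) : Θ (monomial n a) = C (cq a) * X^(2*n) := by
  simp [Θ, eval₂RingHom', eval₂_monomial, pow_mul]

lemma Θ_C (a : ℂ) : Θ (C a) = C (cq a) := by
  simpa using Θ_monomial 0 a

lemma Θ_coeff_even (A : Polynomial ℂ) (m : ℕ) : (Θ A).coeff (2*m) = cq (A.coeff m) := by
  induction A using Polynomial.induction_on' with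
  | add p q hp hq => simp [map_add, hp, hq]
  | monomial n a =>
    rw [Θ_monomial]
    simp [coeff_C_mul, coeff_X_pow, coeff_monomial]
    rcases eq_or_ne m n with h | h
    · simp [h]
    · simp [h, Ne.symm h, fun h2 : 2*m = 2*n => h (by omega)]

lemma Θ_coeff_odd (A : Polynomial ℂ) (m : ℕ) : (Θ A).coeff (2*m+1) = 0 := by
  induction A using Polynomial.induction_on' with
  | add p q hp hq => simp [map_add, hp, hq]
  | monomial n a =>
    rw [Θ_monomial]
    simp [coeff_C_mul, coeff_X_pow]
    intro h; omega

noncomputable def JX : Polynomial (Quaternion ℝ) := C jj * X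

noncomputable def conj' (A : Polynomial ℂ) : Polynomial ℂ := A.map (starRingEnd ℂ)

lemma conj'_C (a : ℂ) : conj' (C a) = C ((starRingEnd ℂ) a) := by simp [conj', map_C]
lemma conj'_add (A B : Polynomial ℂ) : conj' (A + B) = conj' A + conj' B := by
  simp [conj', Polynomial.map_add]
lemma conj'_mul (A B : Polynomial ℂ) : conj' (A * B) = conj' A * conj' B := by
  simp [conj', Polynomial.map_mul]
lemma conj'_X : conj' X = X := by simp [conj']
lemma conj'_conj' (A : Polynomial ℂ) : conj' (conj' A) = A := by
  have : (starRingEnd ℂ).comp (starRingEnd ℂ) = RingHom.id ℂ := by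
    ext z : 1; simp
  rw [conj', conj', Polynomial.map_map, this, Polynomial.map_id]
lemma conj'_neg (A : Polynomial ℂ) : conj' (-A) = -conj' A := by
  simp [conj']
lemma conj'_sub (A B : Polynomial ℂ) : conj' (A - B) = conj' A - conj' B := by
  simp [conj']
lemma conj'_zero : conj' 0 = 0 := by simp [conj']
lemma conj'_one : conj' 1 = 1 := by simp [conj']
lemma conj'_eq_zero {A : Polynomial ℂ} : conj' A = 0 ↔ A = 0 := by
  constructor
  · intro h; have := congrArg conj' h; rwa [conj'_conj', conj'_zero] at this
  · intro h; simp [h, conj'_zero]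

lemma CXmul (q r : Quaternion ℝ) (m k : ℕ) :
    (C q * X^m) * (C r * X^k) = C (q*r) * X^(m+k) := by
  rw [mul_assoc, ← mul_assoc (X^m), X_pow_mul, mul_assoc, ← pow_add, ← mul_assoc, ← C_mul]

lemma JX_Θ (A : Polynomial ℂ) : JX * Θ A = Θ (conj' A) * JX := by
  induction A using Polynomial.induction_on' with
  | add p q hp hq => simp [map_add, conj', Polynomial.map_add, mul_add, add_mul, hp, hq]
  | monomial n a =>
    rw [Θ_monomial, conj', map_monomial, Θ_monomial, JX,
      show C jj * X = C jj * X^1 by rw [pow_one], CXmul, CXmul, jj_cq]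
    ring_nf

lemma Θ_X : Θ (X : Polynomial ℂ) = X^2 := by
  have : (X : Polynomial ℂ) = monomial 1 1 := by simp [monomial_one_one_eq_X]
  rw [this, Θ_monomial]
  simp

lemma JX_JX : JX * JX = Θ (-X) := by
  rw [JX, show C jj * X = C jj * X^1 by rw [pow_one], CXmul, jj_jj,
    show Θ (-X) = -Θ X from map_neg Θ X, Θ_X]
  simp

noncomputable def ofPair (A B : Polynomial ℂ) : Polynomial (Quaternion ℝ) :=
  Θ A + Θ B * JX

lemma ofPair_mul (A B A' B' : Polynomial ℂ) :
    ofPair A B * ofPair A' B' =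
      ofPair (A * A' - X * (B * conj' B')) (A * B' + B * conj' A') := by
  unfold ofPair
  rw [add_mul, mul_add, mul_add, mul_assoc (Θ B) JX (Θ A'), JX_Θ,
    mul_assoc (Θ B) JX (Θ B' * JX), ← mul_assoc JX (Θ B') JX, JX_Θ,
    mul_assoc (Θ (conj' B')) JX JX, JX_JX]
  rw [← mul_assoc (Θ B) (Θ (conj' A')) JX, ← map_mul, ← mul_assoc (Θ B), ← map_mul, ← map_mul]
  rw [show Θ (A * A' - X * (B * conj' B')) = Θ (A*A') + Θ (B * conj' B') * Θ (-X) by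
    rw [← map_mul, ← map_add]; congr 1; ring]
  rw [show Θ (A * B' + B * conj' A') = Θ (A * B') + Θ (B * conj' A') from map_add ..,
    add_mul, ← mul_assoc (Θ A) (Θ B') JX, ← map_mul]
  abel

lemma pconj_coeff (f : Polynomial (Quaternion ℝ)) (k : ℕ) :
    (pconj f).coeff k = star (f.coeff k) := by
  rw [pconj, finset_sum_coeff]
  simp only [coeff_C_mul, coeff_X_pow, mul_ite, mul_one, mul_zero]
  rw [Finset.sum_ite_eq (Finset.range (f.natDegree + 1)) k (fun i => star (f.coeff i))]
  by_cases h : k ∈ Finset.range (f.natDegree + 1)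
  · simp [h]
  · simp only [h, if_false]
    rw [Finset.mem_range] at h
    rw [f.coeff_eq_zero_of_natDegree_lt (by omega), star_zero]

lemma ofPair_coeff_even (A B : Polynomial ℂ) (m : ℕ) :
    (ofPair A B).coeff (2*m) = cq (A.coeff m) := by
  rw [ofPair, coeff_add, Θ_coeff_even, JX, ← mul_assoc]
  rcases Nat.eq_zero_or_pos m with h | h
  · simp [h]
  · rw [show 2*m = (2*(m-1)+1) + 1 by omega, coeff_mul_X, coeff_mul_C, Θ_coeff_odd,
      zero_mul, add_zero]

lemma ofPair_coeff_odd (A B : Polynomial ℂ) (m : ℕ) :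
    (ofPair A B).coeff (2*m+1) = cq (B.coeff m) * jj := by
  rw [ofPair, coeff_add, Θ_coeff_odd, JX, ← mul_assoc, coeff_mul_X, coeff_mul_C,
    Θ_coeff_even, zero_add]

lemma quat_parity_ext (g h : Polynomial (Quaternion ℝ))
    (he : ∀ m, g.coeff (2*m) = h.coeff (2*m)) (ho : ∀ m, g.coeff (2*m+1) = h.coeff (2*m+1)) :
    g = h := by
  apply Polynomial.ext
  intro k
  rcases Nat.even_or_odd k with ⟨m, hm⟩ | ⟨m, hm⟩
  · rw [show k = 2*m by omega]; exact he m
  · rw [show k = 2*m+1 by omega]; exact ho m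

lemma pconj_ofPair (A B : Polynomial ℂ) :
    pconj (ofPair A B) = ofPair (conj' A) (-B) := by
  apply quat_parity_ext
  · intro m
    rw [pconj_coeff, ofPair_coeff_even, ofPair_coeff_even, star_cq, conj', coeff_map]
  · intro m
    rw [pconj_coeff, ofPair_coeff_odd, ofPair_coeff_odd, cq_jj, cq_jj, star_toQj,
      coeff_neg]
    ext <;> simp only [Quaternion.re_mul, Quaternion.imI_mul, Quaternion.imJ_mul, Quaternion.imK_mul, Quaternion.re_star, Quaternion.imI_star, Quaternion.imJ_star, Quaternion.imK_star, Quaternion.re_neg, Quaternion.imI_neg, Quaternion.imJ_neg, Quaternion.imK_neg, Quaternion.re_add, Quaternion.imI_add, Quaternion.imJ_add, Quaternion.imK_add, Quaternion.re_one, Quaternion.imI_one, Quaternion.imJ_one, Quaternion.imK_one, Quaternion.re_zero, Quaternion.imI_zero, Quaternion.imJ_zero, Quaternion.imK_zero] <;> simp [toQj]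

noncomputable def qpoly (A B : Polynomial ℂ) : Polynomial ℂ :=
  conj' A * A + X * (conj' B * B)

lemma companion_ofPair (A B : Polynomial ℂ) :
    pconj (ofPair A B) * ofPair A B = Θ (qpoly A B) := by
  rw [pconj_ofPair, ofPair_mul,
    show conj' A * B + -B * conj' A = 0 by ring,
    show conj' A * A - X * (-B * conj' B) = qpoly A B by rw [qpoly]; ring]
  rw [ofPair, map_zero, zero_mul, add_zero]

lemma qpoly_mul (A B A' B' : Polynomial ℂ) :
    qpoly (A * A' - X * (B * conj' B')) (A * B' + B * conj' A') =
      qpoly A B * qpoly A' B' := by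
  simp only [qpoly, conj'_sub, conj'_add, conj'_mul, conj'_X, conj'_conj']
  ring

lemma lin_eq (a b : ℂ) : C (toQ a) + C (toQj b) * X = ofPair (C a) (C b) := by
  rw [ofPair, Θ_C, Θ_C, JX, ← mul_assoc, ← C_mul, cq_jj]
  rfl

def toCe (q : Quaternion ℝ) : ℂ := ⟨q.re, q.imI⟩
def toCo (q : Quaternion ℝ) : ℂ := ⟨q.imJ, q.imK⟩

noncomputable def Ae (f : Polynomial (Quaternion ℝ)) : Polynomial ℂ :=
  ∑ k ∈ Finset.range (f.natDegree + 1), C (toCe (f.coeff (2*k))) * X^k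

noncomputable def Bo (f : Polynomial (Quaternion ℝ)) : Polynomial ℂ :=
  ∑ k ∈ Finset.range (f.natDegree + 1), C (toCo (f.coeff (2*k+1))) * X^k

lemma Ae_coeff (f : Polynomial (Quaternion ℝ)) (m : ℕ) :
    (Ae f).coeff m = toCe (f.coeff (2*m)) := by
  rw [Ae, finset_sum_coeff]
  simp only [coeff_C_mul, coeff_X_pow, mul_ite, mul_one, mul_zero]
  rw [Finset.sum_ite_eq (Finset.range (f.natDegree + 1)) m (fun i => toCe (f.coeff (2*i)))]
  by_cases h : m ∈ Finset.range (f.natDegree + 1)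
  · simp [h]
  · simp only [h, if_false]
    rw [Finset.mem_range] at h
    rw [f.coeff_eq_zero_of_natDegree_lt (by omega)]
    rfl

lemma Bo_coeff (f : Polynomial (Quaternion ℝ)) (m : ℕ) :
    (Bo f).coeff m = toCo (f.coeff (2*m+1)) := by
  rw [Bo, finset_sum_coeff]
  simp only [coeff_C_mul, coeff_X_pow, mul_ite, mul_one, mul_zero]
  rw [Finset.sum_ite_eq (Finset.range (f.natDegree + 1)) m (fun i => toCo (f.coeff (2*i+1)))]
  by_cases h : m ∈ Finset.range (f.natDegree + 1)
  · simp [h]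
  · simp only [h, if_false]
    rw [Finset.mem_range] at h
    rw [f.coeff_eq_zero_of_natDegree_lt (by omega)]
    rfl

lemma special_eq (f : Polynomial (Quaternion ℝ)) (hsp : IsSpecial f) :
    ofPair (Ae f) (Bo f) = f := by
  apply quat_parity_ext
  · intro m
    rw [ofPair_coeff_even, Ae_coeff]
    obtain ⟨h1, h2⟩ := (hsp (2*m)).1 ⟨m, by omega⟩
    ext <;> simp [cq, toQ, toCe, h1, h2]
  · intro m
    rw [ofPair_coeff_odd, Bo_coeff, cq_jj]
    obtain ⟨h1, h2⟩ := (hsp (2*m+1)).2 ⟨m, by omega⟩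
    ext <;> simp [toQj, toCo, h1, h2]

lemma conj'_natDegree (A : Polynomial ℂ) : (conj' A).natDegree = A.natDegree :=
  natDegree_map_eq_of_injective (RingHom.injective _) A

lemma qpoly_spec (A B : Polynomial ℂ) (h : ¬(A = 0 ∧ B = 0)) :
    qpoly A B ≠ 0 ∧ (natDegree (qpoly A B) = 0 → B = 0 ∧ ∃ a, a ≠ 0 ∧ A = C a) := by
  by_cases hB : B = 0
  · have hA : A ≠ 0 := fun hA => h ⟨hA, hB⟩
    have hq : qpoly A B = conj' A * A := by rw [qpoly, hB]; simp [conj'_zero]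
    have hne : qpoly A B ≠ 0 := by
      rw [hq]; exact mul_ne_zero (conj'_eq_zero.not.mpr hA) hA
    refine ⟨hne, fun hdeg => ⟨hB, ?_⟩⟩
    rw [hq, natDegree_mul (conj'_eq_zero.not.mpr hA) hA, conj'_natDegree] at hdeg
    have : A.natDegree = 0 := by omega
    have hAC : A = C (A.coeff 0) := eq_C_of_natDegree_eq_zero this
    exact ⟨A.coeff 0, fun h0 => hA (by rw [hAC, h0, map_zero]), hAC⟩
  · -- B ≠ 0
    have hT2 : (X * (conj' B * B)).natDegree = 2 * B.natDegree + 1 := by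
      rw [natDegree_mul (X_ne_zero) (mul_ne_zero (conj'_eq_zero.not.mpr hB) hB),
        natDegree_mul (conj'_eq_zero.not.mpr hB) hB, conj'_natDegree, natDegree_X]
      ring
    have hT2ne : X * (conj' B * B) ≠ 0 :=
      mul_ne_zero X_ne_zero (mul_ne_zero (conj'_eq_zero.not.mpr hB) hB)
    by_cases hA : A = 0
    · have hq : qpoly A B = X * (conj' B * B) := by rw [qpoly, hA]; simp [conj'_zero]
      refine ⟨by rw [hq]; exact hT2ne, fun hdeg => absurd (hq ▸ hdeg) (by rw [hT2]; omega)⟩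
    · have hT1 : (conj' A * A).natDegree = 2 * A.natDegree := by
        rw [natDegree_mul (conj'_eq_zero.not.mpr hA) hA, conj'_natDegree]; ring
      have hT1ne : conj' A * A ≠ 0 := mul_ne_zero (conj'_eq_zero.not.mpr hA) hA
      rcases lt_or_gt_of_ne (show (conj' A * A).natDegree ≠ (X * (conj' B * B)).natDegree by
        rw [hT1, hT2]; omega) with hlt | hgt
      · have hdlt : (conj' A * A).degree < (X * (conj' B * B)).degree := by
          rw [degree_eq_natDegree hT1ne, degree_eq_natDegree hT2ne]
          exact_mod_cast hlt
        have hdeg : (qpoly A B).degree = (X * (conj' B * B)).degree := by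
          rw [qpoly]; exact degree_add_eq_right_of_degree_lt hdlt
        have hne : qpoly A B ≠ 0 := by
          intro h0
          rw [h0, degree_zero, eq_comm, degree_eq_bot] at hdeg
          exact hT2ne hdeg
        refine ⟨hne, fun h0 => ?_⟩
        have : (qpoly A B).natDegree = 2 * B.natDegree + 1 := by
          rw [natDegree, hdeg, ← natDegree, hT2]
        omega
      · have hdlt : (X * (conj' B * B)).degree < (conj' A * A).degree := by
          rw [degree_eq_natDegree hT1ne, degree_eq_natDegree hT2ne]
          exact_mod_cast hgt
        have hdeg : (qpoly A B).degree = (conj' A * A).degree := by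
          rw [qpoly]; exact degree_add_eq_left_of_degree_lt hdlt
        have hne : qpoly A B ≠ 0 := by
          intro h0
          rw [h0, degree_zero, eq_comm, degree_eq_bot] at hdeg
          exact hT1ne hdeg
        refine ⟨hne, fun h0 => ?_⟩
        have : (qpoly A B).natDegree = 2 * A.natDegree := by
          rw [natDegree, hdeg, ← natDegree, hT1]
        omega

lemma conj'_eval_real (A : Polynomial ℂ) (u : ℂ) (hu : u.im = 0) :
    (conj' A).eval u = (starRingEnd ℂ) (A.eval u) := by
  have h : (starRingEnd ℂ) u = u := Complex.conj_eq_iff_im.mpr hu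
  rw [conj', ← h, eval_map, eval₂_at_apply, h]

lemma core_base (A B : Polynomial ℂ) (hnb : ¬(A = 0 ∧ B = 0))
    (h0 : (qpoly A B).natDegree = 0) :
    ∃ L : List (ℂ × ℂ),
      ofPair A B = (L.map fun x => C (toQ x.1) + C (toQj x.2) * X).prod := by
  obtain ⟨hB, a, _, hA⟩ := (qpoly_spec A B hnb).2 h0
  refine ⟨[(a, 0)], ?_⟩
  rw [List.map_cons, List.map_nil, List.prod_cons, List.prod_nil, mul_one, lin_eq, hA, hB,
    map_zero]

lemma core : ∀ (n : ℕ) (A B : Polynomial ℂ), (qpoly A B).natDegree ≤ n →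
    ¬(A = 0 ∧ B = 0) →
    (∀ u : ℂ, (qpoly A B).eval u = 0 → u.im = 0 ∧ u.re ≤ 0) →
    ∃ L : List (ℂ × ℂ),
      ofPair A B = (L.map fun x => C (toQ x.1) + C (toQj x.2) * X).prod := by
  intro n
  induction n with
  | zero => exact fun A B hdeg hnb _ => core_base A B hnb (Nat.le_zero.mp hdeg)
  | succ n ih =>
    intro A B hdeg hnb hroots
    by_cases h0 : (qpoly A B).natDegree = 0
    · exact core_base A B hnb h0
    have hq0 : 0 < (qpoly A B).degree := by
      rw [← natDegree_pos_iff_degree_pos]; omega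
    obtain ⟨u, hu⟩ := Complex.exists_root hq0
    obtain ⟨him, hre⟩ := hroots u hu
    have hcu : (starRingEnd ℂ) u = u := Complex.conj_eq_iff_im.mpr him
    have hev : (starRingEnd ℂ) (A.eval u) * (A.eval u)
        + u * ((starRingEnd ℂ) (B.eval u) * (B.eval u)) = 0 := by
      have h := hu
      simp only [IsRoot, qpoly, eval_add, eval_mul, eval_X,
        conj'_eval_real A u him, conj'_eval_real B u him] at h
      exact h
    by_cases hβ : B.eval u = 0
    · -- quadratic factor case
      have hα : A.eval u = 0 := by
        rw [hβ] at hev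
        simp only [map_zero, zero_mul, mul_zero, add_zero] at hev
        rcases mul_eq_zero.mp hev with h | h
        · simpa using congrArg (starRingEnd ℂ) h
        · exact h
      obtain ⟨A₁, hA1⟩ := dvd_iff_isRoot.mpr hα
      obtain ⟨B₁, hB1⟩ := dvd_iff_isRoot.mpr hβ
      have hcXu : conj' (X - C u) = X - C u := by rw [conj'_sub, conj'_X, conj'_C, hcu]
      have hqf : qpoly A B = (X - C u)^2 * qpoly A₁ B₁ := by
        rw [qpoly, qpoly, hA1, hB1, conj'_mul, conj'_mul, hcXu]; ring
      have hq1ne0 : qpoly A₁ B₁ ≠ 0 := by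
        intro h; exact (qpoly_spec A B hnb).1 (by rw [hqf, h, mul_zero])
      have hnb1 : ¬(A₁ = 0 ∧ B₁ = 0) := by
        rintro ⟨h1, h2⟩
        exact hnb ⟨by rw [hA1, h1, mul_zero], by rw [hB1, h2, mul_zero]⟩
      have hdeg1 : (qpoly A₁ B₁).natDegree ≤ n := by
        have hXu2 : ((X - C u)^2 : Polynomial ℂ) ≠ 0 := pow_ne_zero 2 (X_sub_C_ne_zero u)
        have h := natDegree_mul hXu2 hq1ne0
        rw [← hqf, natDegree_pow, natDegree_X_sub_C] at h
        omega
      have hroots1 : ∀ v : ℂ, (qpoly A₁ B₁).eval v = 0 → v.im = 0 ∧ v.re ≤ 0 := fun v hv =>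
        hroots v (by rw [hqf, eval_mul, hv, mul_zero])
      obtain ⟨L₁, hL₁⟩ := ih A₁ B₁ hdeg1 hnb1 hroots1
      set y : ℝ := Real.sqrt (-u.re) with hydef
      have hy : ((y:ℂ))^2 = -u := by
        have h : (y:ℝ)^2 = -u.re := Real.sq_sqrt (by linarith)
        rw [show ((y:ℂ))^2 = ((y^2 : ℝ) : ℂ) by push_cast; ring, h]
        apply Complex.ext <;> simp [him]
      have key1 : ofPair (C (-(y:ℂ)*Complex.I)) (C (-1)) * ofPair (C ((y:ℂ)*Complex.I)) (C 1)
          = ofPair (X - C u) 0 := by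
        have hIa : (-((y:ℂ))*Complex.I) * (((y:ℂ))*Complex.I) = -u := by
          rw [show (-((y:ℂ))*Complex.I) * (((y:ℂ))*Complex.I)
              = -(((y:ℂ))^2 * (Complex.I*Complex.I)) by ring, Complex.I_mul_I, hy]
          ring
        rw [ofPair_mul, conj'_C, conj'_C, map_one]
        congr 1
        · rw [← C_mul, hIa, map_neg]
          simp only [C_1, map_neg, C_neg]
          ring
        · rw [show (starRingEnd ℂ) ((y:ℂ)*Complex.I) = -((y:ℂ)*Complex.I) by
            simp [Complex.ext_iff]]
          simp [C_1]
      have key2 : ofPair (X - C u) 0 * ofPair A₁ B₁ = ofPair A B := by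
        rw [ofPair_mul]
        congr 1
        · rw [hA1]; ring
        · rw [hB1]; ring
      refine ⟨(-(y:ℂ)*Complex.I, -1) :: ((y:ℂ)*Complex.I, 1) :: L₁, ?_⟩
      rw [List.map_cons, List.map_cons, List.prod_cons, List.prod_cons, ← hL₁,
        lin_eq, lin_eq, ← mul_assoc, key1, key2]
    · -- linear factor case
      have hβc : (starRingEnd ℂ) (B.eval u) ≠ 0 := fun h =>
        hβ (by simpa using congrArg (starRingEnd ℂ) h)
      set b : ℂ := (starRingEnd ℂ) (A.eval u) / (starRingEnd ℂ) (B.eval u) with hbdef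
      have hcb : (starRingEnd ℂ) b = A.eval u / B.eval u := by
        rw [hbdef, map_div₀]; simp
      have hbb : (starRingEnd ℂ) b * b = -u := by
        rw [hcb, hbdef]
        field_simp
        linear_combination hev
      have hroot2 : (C ((starRingEnd ℂ) b) * B - A).IsRoot u := by
        rw [IsRoot, eval_sub, eval_mul, eval_C, hcb]
        rw [div_mul_cancel₀ _ hβ, sub_self]
      obtain ⟨D, hD⟩ := dvd_iff_isRoot.mpr hroot2
      set Cc : Polynomial ℂ := B - C b * D with hCc
      have hbbC : C ((starRingEnd ℂ) b) * C b = -C u := by rw [← C_mul, hbb, map_neg]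
      have h1 : A = C ((starRingEnd ℂ) b) * Cc - X * D := by
        rw [hCc]; linear_combination hbbC * D - hD
      have h2 : B = Cc + C b * D := by rw [hCc]; ring
      have key : ofPair Cc D * ofPair (C ((starRingEnd ℂ) b)) (C 1) = ofPair A B := by
        rw [ofPair_mul, conj'_C, conj'_C, map_one, Complex.conj_conj]
        congr 1
        · simp only [C_1, mul_one]; linear_combination -h1
        · simp only [C_1, mul_one]; linear_combination -h2
      have hqf : qpoly A B = qpoly Cc D * (X - C u) := by
        have hA' : conj' A = C b * conj' Cc - X * conj' D := by
          rw [h1, conj'_sub, conj'_mul, conj'_mul, conj'_C, conj'_X, Complex.conj_conj]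
        have hB' : conj' B = conj' Cc + C ((starRingEnd ℂ) b) * conj' D := by
          rw [h2, conj'_add, conj'_mul, conj'_C]
        rw [qpoly, qpoly, hA', hB', h1, h2,
          show (X : Polynomial ℂ) - C u = X + C ((starRingEnd ℂ) b) * C b by
            rw [hbbC]; ring]
        ring
      have hq1ne : qpoly Cc D ≠ 0 := fun h =>
        (qpoly_spec A B hnb).1 (by rw [hqf, h, zero_mul])
      have hdeg1 : (qpoly Cc D).natDegree ≤ n := by
        have h := natDegree_mul hq1ne (X_sub_C_ne_zero u)
        rw [← hqf, natDegree_X_sub_C] at h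
        omega
      have hnb1 : ¬(Cc = 0 ∧ D = 0) := by
        rintro ⟨hc, hd⟩
        apply hβ
        rw [show B.eval u = (Cc + C b * D).eval u by rw [← h2], hc, hd]
        simp
      have hroots1 : ∀ v : ℂ, (qpoly Cc D).eval v = 0 → v.im = 0 ∧ v.re ≤ 0 := fun v hv =>
        hroots v (by rw [hqf, eval_mul, hv, zero_mul])
      obtain ⟨L₁, hL₁⟩ := ih Cc D hdeg1 hnb1 hroots1
      refine ⟨L₁ ++ [((starRingEnd ℂ) b, 1)], ?_⟩
      rw [List.map_append, List.prod_append, ← hL₁, List.map_cons, List.map_nil,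
        List.prod_cons, List.prod_nil, mul_one, lin_eq, key]

lemma compsq_coeff_even (q : Polynomial ℂ) (m : ℕ) : (q.comp (X^2)).coeff (2*m) = q.coeff m := by
  induction q using Polynomial.induction_on' with
  | add p q hp hq => simp [add_comp, hp, hq]
  | monomial n a =>
    rw [← C_mul_X_pow_eq_monomial, mul_comp, C_comp, X_pow_comp, ← pow_mul]
    simp only [coeff_C_mul, coeff_X_pow, coeff_monomial, mul_ite, mul_one, mul_zero]
    rcases eq_or_ne m n with h | h
    · simp [h, mul_comm]
    · simp [h, Ne.symm h, fun h2 : 2*m = 2*n => h (by omega), fun h2 : m*2 = 2*n => h (by omega)]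

lemma compsq_coeff_odd (q : Polynomial ℂ) (m : ℕ) : (q.comp (X^2)).coeff (2*m+1) = 0 := by
  induction q using Polynomial.induction_on' with
  | add p q hp hq => simp [add_comp, hp, hq]
  | monomial n a =>
    rw [← C_mul_X_pow_eq_monomial, mul_comp, C_comp, X_pow_comp, ← pow_mul]
    simp only [coeff_C_mul, coeff_X_pow]
    rw [if_neg (by omega)]
    simp

lemma cq_real (r : ℝ) : cq ((r : ℂ)) = algebraMap ℝ (Quaternion ℝ) r := by
  ext <;> simp [cq, toQ, QuaternionAlgebra.coe_algebraMap] <;> rfl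

lemma algQ_inj : Function.Injective (algebraMap ℝ (Quaternion ℝ)) := fun a b h => by
  have := congrArg QuaternionAlgebra.re h
  simpa using this

lemma theta_eq_map (q : Polynomial ℂ) (p : Polynomial ℝ)
    (h : Θ q = p.map (algebraMap ℝ (Quaternion ℝ))) :
    p.map (algebraMap ℝ ℂ) = q.comp (X^2) := by
  ext n
  rcases Nat.even_or_odd n with ⟨m, hm⟩ | ⟨m, hm⟩
  · rw [show n = 2*m by omega, coeff_map, compsq_coeff_even]
    have hc := congrArg (fun g => Polynomial.coeff g (2*m)) h
    simp only [Θ_coeff_even, coeff_map] at hc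
    have : cq (q.coeff m) = cq ((algebraMap ℝ ℂ) (p.coeff (2*m))) := by
      rw [hc, ← cq_real]; rfl
    exact (cq_inj this).symm
  · rw [show n = 2*m+1 by omega, coeff_map, compsq_coeff_odd]
    have hc := congrArg (fun g => Polynomial.coeff g (2*m+1)) h
    simp only [Θ_coeff_odd, coeff_map] at hc
    have : (algebraMap ℝ (Quaternion ℝ)) (p.coeff (2*m+1)) = (algebraMap ℝ (Quaternion ℝ)) 0 := by
      rw [← hc, map_zero]
    rw [algQ_inj this, map_zero]

lemma root_transfer (q : Polynomial ℂ) (p : Polynomial ℝ)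
    (h : p.map (algebraMap ℝ ℂ) = q.comp (X^2)) (w : ℂ) :
    (aeval w p : ℂ) = q.eval (w^2) := by
  rw [aeval_def, ← eval_map, h, eval_comp, eval_pow, eval_X]

lemma prod_rep : ∀ L : List (ℂ × ℂ), ∃ A B : Polynomial ℂ,
    (L.map fun x => C (toQ x.1) + C (toQj x.2) * X).prod = ofPair A B ∧
    qpoly A B = (L.map fun x =>
      (C ((starRingEnd ℂ) x.1 * x.1) + X * C ((starRingEnd ℂ) x.2 * x.2))).prod := by
  intro L
  induction L with
  | nil =>
    refine ⟨1, 0, ?_, ?_⟩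
    · simp [ofPair, map_one, map_zero]
    · simp [qpoly, conj'_zero, conj'_one]
  | cons x L ih =>
    obtain ⟨A, B, h1, h2⟩ := ih
    have hx : qpoly (C x.1) (C x.2)
        = C ((starRingEnd ℂ) x.1 * x.1) + X * C ((starRingEnd ℂ) x.2 * x.2) := by
      rw [qpoly, conj'_C, conj'_C, C_mul, C_mul]
    refine ⟨C x.1 * A - X * (C x.2 * conj' B), C x.1 * B + C x.2 * conj' A, ?_, ?_⟩
    · rw [List.map_cons, List.prod_cons, h1, lin_eq, ofPair_mul]
    · rw [List.map_cons, List.prod_cons, ← h2, ← hx, ← qpoly_mul]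

lemma imag_of (a b w : ℂ) (hnz : ¬(a = 0 ∧ b = 0))
    (h : (starRingEnd ℂ) a * a + w^2 * ((starRingEnd ℂ) b * b) = 0) : w.re = 0 := by
  have hb : b ≠ 0 := by
    rintro rfl
    simp only [map_zero, mul_zero, zero_mul, add_zero] at h
    rcases mul_eq_zero.mp h with h' | h'
    · exact hnz ⟨by simpa using congrArg (starRingEnd ℂ) h', rfl⟩
    · exact hnz ⟨h', rfl⟩
  have h2 : w^2 * ((Complex.normSq b : ℝ) : ℂ) = -((Complex.normSq a : ℝ) : ℂ) := by
    rw [← Complex.mul_conj, ← Complex.mul_conj]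
    linear_combination h
  have hnb : (0:ℝ) < Complex.normSq b := Complex.normSq_pos.mpr hb
  have him : (w^2).im * Complex.normSq b = 0 := by
    have := congrArg Complex.im h2
    simpa [Complex.mul_im] using this
  have hre : (w^2).re * Complex.normSq b = -Complex.normSq a := by
    have := congrArg Complex.re h2
    simpa [Complex.mul_re] using this
  have him2 : w.re * w.im = 0 := by
    have h3 : (w^2).im = 0 := by
      have := mul_eq_zero.mp him
      rcases this with h' | h'
      · exact h'
      · exact absurd h' (ne_of_gt hnb)
    simp only [pow_two, Complex.mul_im] at h3
    linarith
  have hre2 : w.re * w.re - w.im * w.im ≤ 0 := by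
    have h4 : (w^2).re ≤ 0 := by
      have hna : (0:ℝ) ≤ Complex.normSq a := Complex.normSq_nonneg a
      nlinarith
    simpa [pow_two, Complex.mul_re] using h4
  rcases mul_eq_zero.mp him2 with h' | h'
  · exact h'
  · nlinarith [sq_nonneg w.re]

lemma list_form : ∀ L : List (Polynomial (Quaternion ℝ)),
    (∀ g ∈ L, ∃ a b : ℂ, g = C (toQ a) + C (toQj b) * X) →
    ∃ Lp : List (ℂ × ℂ), L = Lp.map fun x => C (toQ x.1) + C (toQj x.2) * X := by
  intro L
  induction L with
  | nil => exact fun _ => ⟨[], rfl⟩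
  | cons g L ih =>
    intro h
    obtain ⟨a, b, hg⟩ := h g List.mem_cons_self
    obtain ⟨Lp, hLp⟩ := ih (fun g' hg' => h g' (List.mem_cons_of_mem g hg'))
    exact ⟨(a, b) :: Lp, by rw [List.map_cons, ← hg, ← hLp]⟩

lemma toQ_zero : toQ 0 = 0 := by ext <;> simp [toQ]
lemma toQj_zero : toQj 0 = 0 := by ext <;> simp [toQj]

/-- A nonzero special quaternionic polynomial `f` factors into a product of linear
special polynomials `a + (b𝐣)t` (`a, b ∈ ℂ`) if and only if all complex roots of the
(real) companion polynomial `f̄ f` lie on the imaginary axis. -/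
theorem special_factors_iff_companion_roots_imaginary
    (f : Polynomial (Quaternion ℝ)) (hf : f ≠ 0) (hsp : IsSpecial f)
    (p : Polynomial ℝ) (hp : pconj f * f = p.map (algebraMap ℝ (Quaternion ℝ))) :
    (∃ L : List (Polynomial (Quaternion ℝ)),
        (∀ g ∈ L, ∃ a b : ℂ, g = C (toQ a) + C (toQj b) * X) ∧ f = L.prod) ↔
    (∀ w : ℂ, Polynomial.aeval w p = 0 → w.re = 0) := by
  have hfAB : ofPair (Ae f) (Bo f) = f := special_eq f hsp
  constructor
  · rintro ⟨L, hforms, hprod⟩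
    obtain ⟨Lp, rfl⟩ := list_form L hforms
    obtain ⟨A', B', hrep, hq⟩ := prod_rep Lp
    have hf' : f = ofPair A' B' := hprod.trans hrep
    have hcomp : Θ (qpoly A' B') = p.map (algebraMap ℝ (Quaternion ℝ)) := by
      rw [← companion_ofPair, ← hf', hp]
    have hmap := theta_eq_map _ _ hcomp
    intro w hw
    have hqr : (qpoly A' B').eval (w^2) = 0 := by
      rw [← root_transfer _ _ hmap w, hw]
    rw [hq, eval_list_prod] at hqr
    have hz := List.prod_eq_zero_iff.mp hqr
    rw [List.map_map, List.mem_map] at hz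
    obtain ⟨⟨a, b⟩, hmem, hz0⟩ := hz
    simp only [Function.comp_apply, eval_add, eval_mul, eval_C, eval_X] at hz0
    have hnz : ¬(a = 0 ∧ b = 0) := by
      rintro ⟨rfl, rfl⟩
      apply hf
      rw [hprod]
      apply List.prod_eq_zero
      rw [List.mem_map]
      exact ⟨(0, 0), hmem, by rw [toQ_zero, toQj_zero]; simp⟩
    exact imag_of a b w hnz (by linear_combination hz0)   -- hz0 : conj a * a + w^2 * (conj b * b) = 0
  · intro hroots
    have h0 : ¬(Ae f = 0 ∧ Bo f = 0) := by
      rintro ⟨h1, h2⟩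
      apply hf
      rw [← hfAB, h1, h2]
      simp [ofPair, map_zero]
    have hcomp : Θ (qpoly (Ae f) (Bo f)) = p.map (algebraMap ℝ (Quaternion ℝ)) := by
      rw [← companion_ofPair, hfAB, hp]
    have hmap := theta_eq_map _ _ hcomp
    have hq_roots : ∀ u : ℂ, (qpoly (Ae f) (Bo f)).eval u = 0 → u.im = 0 ∧ u.re ≤ 0 := by
      intro u hu
      obtain ⟨w, hw⟩ : ∃ w : ℂ, w^2 = u := by
        rcases Complex.exists_root (f := X^2 - C u)
          (by rw [degree_X_pow_sub_C (by norm_num : 0 < 2)]; norm_num) with ⟨w, hw⟩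
        refine ⟨w, ?_⟩
        have := hw
        rw [IsRoot, eval_sub, eval_pow, eval_X, eval_C, sub_eq_zero] at this
        exact this
      have hpw : aeval w p = 0 := by
        rw [root_transfer _ _ hmap w, hw, hu]
      have hwre := hroots w hpw
      constructor
      · rw [← hw]; simp [pow_two, Complex.mul_im, hwre]
      · rw [← hw]
        simp only [pow_two, Complex.mul_re, hwre, zero_mul, zero_sub]
        simp [mul_self_nonneg]
    obtain ⟨Lp, hLp⟩ := core (qpoly (Ae f) (Bo f)).natDegree (Ae f) (Bo f) le_rfl h0 hq_roots
    refine ⟨Lp.map (fun x => C (toQ x.1) + C (toQj x.2) * X), ?_, ?_⟩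
    · intro g hg
      rw [List.mem_map] at hg
      obtain ⟨x, _, rfl⟩ := hg
      exact ⟨x.1, x.2, rfl⟩
    · rw [← hfAB, hLp]
end

section
/- Let n ∈ ℕ and z₁, …, zₙ ∈ ℂ, and let f := (1 + (z₁𝐣)t)·(1 + (z₂𝐣)t)·⋯·(1 + (zₙ𝐣)t) ∈ ℍ[t], the product taken in increasing order of the index. Then f̄·f = ∏_{k=1}^{n} (1 + |z_k|²·t²), where the right-hand side is a polynomial with real coefficients regarded as quaternions. -/
open Polynomial

lemma coeff_pconj (f : Polynomial (Quaternion ℝ)) (m : ℕ) :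
    (pconj f).coeff m = star (f.coeff m) := by
  unfold pconj
  rw [finset_sum_coeff]
  simp only [coeff_C_mul, coeff_X_pow, mul_ite, mul_one, mul_zero]
  rw [Finset.sum_ite_eq (Finset.range (f.natDegree + 1)) m (fun k => star (f.coeff k))]
  by_cases h : m ∈ Finset.range (f.natDegree + 1)
  · simp [h]
  · simp only [h, if_false]
    rw [f.coeff_eq_zero_of_natDegree_lt, star_zero]
    simpa [Nat.lt_succ_iff, not_le] using h

lemma pconj_mul (f g : Polynomial (Quaternion ℝ)) :
    pconj (f * g) = pconj g * pconj f := by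
  refine Polynomial.ext fun m => ?_
  rw [coeff_pconj, coeff_mul, coeff_mul, star_sum]
  conv_rhs => rw [← Finset.Nat.sum_antidiagonal_swap]
  refine Finset.sum_congr rfl fun p _ => ?_
  simp [coeff_pconj, star_mul]

lemma pconj_one : pconj (1 : Polynomial (Quaternion ℝ)) = 1 := by
  refine Polynomial.ext fun m => ?_
  rw [coeff_pconj]
  simp [coeff_one, apply_ite (star : Quaternion ℝ → Quaternion ℝ)]

lemma commute_C_real (a : ℝ) (q : Polynomial (Quaternion ℝ)) :
    Commute (C (algebraMap ℝ (Quaternion ℝ) a)) q := by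
  induction q using Polynomial.induction_on' with
  | add p q hp hq => exact hp.add_right hq
  | monomial k b =>
      rw [← C_mul_X_pow_eq_monomial]
      have h1 : Commute (C (algebraMap ℝ (Quaternion ℝ) a)) (C b) := by
        rw [Commute, SemiconjBy, ← C_mul, ← C_mul, Algebra.commutes]
      exact h1.mul_right ((commute_X _).symm.pow_right k)

lemma commute_map_real (p : Polynomial ℝ) (q : Polynomial (Quaternion ℝ)) :
    Commute (p.map (algebraMap ℝ (Quaternion ℝ))) q := by
  induction p using Polynomial.induction_on' with
  | add r s hr hs => rw [Polynomial.map_add]; exact hr.add_left hs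
  | monomial k b =>
      rw [Polynomial.map_monomial, ← C_mul_X_pow_eq_monomial]
      exact (commute_C_real b q).mul_left ((commute_X q).pow_left k)

lemma expand_prod (a b : Quaternion ℝ) :
    (1 + C a * X) * (1 + C b * X) = 1 + C (a + b) * X + C (a * b) * X ^ 2 := by
  have h : C a * X * (C b * X) = C (a * b) * X ^ 2 := by
    rw [mul_assoc (C a) X, ← mul_assoc X (C b) X, X_mul_C, mul_assoc (C b) X X, ← sq,
      ← mul_assoc, ← C_mul]
  simp only [mul_add, add_mul, one_mul, mul_one, h, C_add, add_assoc]

lemma key (z : ℂ) :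
    pconj (1 + C (toQj z) * X) * (1 + C (toQj z) * X) =
      ((1 + C (Complex.normSq z) * X ^ 2 : Polynomial ℝ)).map
        (algebraMap ℝ (Quaternion ℝ)) := by
  have hp : pconj (1 + C (toQj z) * X) = 1 + C (star (toQj z)) * X := by
    refine Polynomial.ext fun m => ?_
    rw [coeff_pconj]
    rcases m with _ | _ | m <;> simp [coeff_one]
  have hstar : star (toQj z) + toQj z = 0 := by
    ext <;> simp <;> change _ = (0:ℝ) <;> simp [toQj]
  have hns : star (toQj z) * toQj z =
      algebraMap ℝ (Quaternion ℝ) (Complex.normSq z) := by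
    rw [Quaternion.star_mul_self]
    have : (algebraMap ℝ (Quaternion ℝ)) (Complex.normSq z) = ((Complex.normSq z : ℝ) : Quaternion ℝ) := rfl
    rw [this]
    congr 1
    simp [Quaternion.normSq_def']
    show (0:ℝ)^2 + 0^2 + z.re^2 + z.im^2 = _
    rw [Complex.normSq_apply]
    ring
  rw [hp, expand_prod, hstar, hns]
  simp only [Polynomial.map_add, Polynomial.map_one, Polynomial.map_mul, Polynomial.map_pow,
    map_C, map_X, map_zero, C_0, zero_mul, add_zero]

lemma key_list (l : List ℂ) :
    pconj ((l.map fun w => 1 + C (toQj w) * X).prod) *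
        ((l.map fun w => 1 + C (toQj w) * X).prod) =
      ((l.map fun w => (1 + C (Complex.normSq w) * X ^ 2 : Polynomial ℝ)).prod).map
        (algebraMap ℝ (Quaternion ℝ)) := by
  induction l with
  | nil =>
      simp [pconj_one]
  | cons w t ih =>
      simp only [List.map_cons, List.prod_cons, Polynomial.map_mul]
      rw [pconj_mul]
      calc pconj ((t.map fun w => 1 + C (toQj w) * X).prod) * pconj (1 + C (toQj w) * X) *
            ((1 + C (toQj w) * X) * (t.map fun w => 1 + C (toQj w) * X).prod)
          = pconj ((t.map fun w => 1 + C (toQj w) * X).prod) *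
              (pconj (1 + C (toQj w) * X) * (1 + C (toQj w) * X)) *
              (t.map fun w => 1 + C (toQj w) * X).prod := by
            simp only [mul_assoc]
        _ = (pconj (1 + C (toQj w) * X) * (1 + C (toQj w) * X)) *
              (pconj ((t.map fun w => 1 + C (toQj w) * X).prod) *
              (t.map fun w => 1 + C (toQj w) * X).prod) := by
            rw [key, ← mul_assoc, ← (commute_map_real _ _).eq, mul_assoc]
        _ = _ := by rw [key, ih, ← Polynomial.map_mul]

/-- The companion polynomial of `f = (1 + (z₁𝐣)t) ⋯ (1 + (zₙ𝐣)t)` is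
`f̄ f = ∏ₖ (1 + |z_k|² t²)`, a real polynomial regarded as a quaternionic one. -/
theorem companion_of_edge_product (n : ℕ) (z : Fin n → ℂ) :
    pconj (((List.finRange n).map fun k => 1 + C (toQj (z k)) * X).prod) *
        (((List.finRange n).map fun k => 1 + C (toQj (z k)) * X).prod) =
      (∏ k : Fin n, (1 + C (Complex.normSq (z k)) * X ^ 2) : Polynomial ℝ).map
        (algebraMap ℝ (Quaternion ℝ)) := by
  have := key_list ((List.finRange n).map z)
  simp only [List.map_map, Function.comp_def] at this
  rw [Fin.prod_univ_def]
  exact this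
end
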